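/- Let Φ(x) := e^{−x²/2} L(x). Then the following conjugation identities hold for all x ∈ ℝ: (i) for every differentiable F : ℝ → M_N(ℂ), (F'(x) + F(x)A)Φ(x) = (FΦ)'(x) + x (FΦ)(x); (ii) (J − xA + ½A²)Φ(x) = Φ(x)J; (iii) for every twice differentiable F, (−½F''(x) + F'(x)(xI−A) + F(x)J)Φ(x) = −½(FΦ)''(x) + ½(x²−1)(FΦ)(x) + (FΦ)(x)J. Equivalently, conjugation by Φ turns the operators 𝒟 = ∂_x + A, the Casimir J − xA + ½A², and D = −½∂_x² + ∂_x(xI−A) + J into ∂_x + x, J, and ½(−∂_x² + x² − 1)I + J respectively. -/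

import Mathlib

open MeasureTheory Matrix Finset
open scoped ComplexOrder

/-- The physicists' Hermite polynomials, as functions on `ℝ`:
`H_0 = 1`, `H_1(x) = 2x`, `H_{m+1}(x) = 2x H_m(x) − 2m H_{m−1}(x)`. -/
noncomputable def hermiteF : ℕ → ℝ → ℝ
  | 0, _ => 1
  | 1, x => 2 * x
  | (m + 2), x => 2 * x * hermiteF (m + 1) x - 2 * (m + 1) * hermiteF m x

/-- Entrywise integral of a matrix-valued function on `ℝ`. -/
noncomputable def matInt (N : ℕ) (F : ℝ → Matrix (Fin N) (Fin N) ℂ) :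
    Matrix (Fin N) (Fin N) ℂ :=
  Matrix.of fun i j => ∫ y : ℝ, F y i j

/-- Entrywise derivative of a matrix-valued function on `ℝ`. -/
noncomputable def matDeriv (N : ℕ) (F : ℝ → Matrix (Fin N) (Fin N) ℂ) (x : ℝ) :
    Matrix (Fin N) (Fin N) ℂ :=
  Matrix.of fun i j => deriv (fun y => F y i j) x

/-- `F` is a matrix polynomial of degree `n` with leading coefficient the identity. -/
def IsMonicMatPoly (N n : ℕ) (F : ℝ → Matrix (Fin N) (Fin N) ℂ) : Prop :=
  ∃ c : ℕ → Matrix (Fin N) (Fin N) ℂ, c n = 1 ∧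
    ∀ x : ℝ, F x = ∑ k ∈ Finset.range (n + 1), ((x : ℂ) ^ k) • c k

/-- The matrix-valued inner product `⟨H, G⟩ = ∫ H(y) W(y) G(y)* dy`. -/
noncomputable def matIP (N : ℕ) (W H G : ℝ → Matrix (Fin N) (Fin N) ℂ) :
    Matrix (Fin N) (Fin N) ℂ :=
  matInt N fun y => H y * W y * (G y)ᴴ

/-- The lower triangular matrix `L(x)` with entries
`L(x)_{jk} = (H_{j−k}(x)/(j−k)!)·(α_j/α_k)` for `j ≥ k` (here `0`-based indices). -/
noncomputable def Lmat (N : ℕ) (α : Fin N → ℝ) (x : ℝ) : Matrix (Fin N) (Fin N) ℂ :=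
  Matrix.of fun j k =>
    if (k : ℕ) ≤ (j : ℕ) then
      ((hermiteF ((j : ℕ) - (k : ℕ)) x / Nat.factorial ((j : ℕ) - (k : ℕ)) *
          (α j / α k) : ℝ) : ℂ)
    else 0

/-- The Hermite-type matrix weight `W(x) = e^{−x²} L(x)L(x)*`. -/
noncomputable def hermW (N : ℕ) (α : Fin N → ℝ) (x : ℝ) : Matrix (Fin N) (Fin N) ℂ :=
  Real.exp (-x ^ 2) • (Lmat N α x * (Lmat N α x)ᴴ)

/-- The nilpotent shift matrix `A` with `A_{j,j−1} = 2α_j/α_{j−1}` (1-based), i.e.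
(0-based) `A j k = 2 α_j / α_k` when `j = k + 1`. -/
noncomputable def Amat (N : ℕ) (α : Fin N → ℝ) : Matrix (Fin N) (Fin N) ℂ :=
  Matrix.of fun j k => if (j : ℕ) = (k : ℕ) + 1 then ((2 * α j / α k : ℝ) : ℂ) else 0

/-- The diagonal matrix `J = diag(1, 2, …, N)`. -/
def Jmat (N : ℕ) : Matrix (Fin N) (Fin N) ℂ :=
  Matrix.diagonal fun j => ((j : ℕ) + 1 : ℂ)

/-- The function `Φ(x) = e^{−x²/2} L(x)`. -/
noncomputable def PhiMat (N : ℕ) (α : Fin N → ℝ) (x : ℝ) : Matrix (Fin N) (Fin N) ℂ :=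
  Real.exp (-x ^ 2 / 2) • Lmat N α x

lemma hermiteF_succ (m : ℕ) (x : ℝ) :
    hermiteF (m + 1) x = 2 * x * hermiteF m x - 2 * m * hermiteF (m - 1) x := by
  match m with
  | 0 => simp [hermiteF]
  | (k+1) => simp [hermiteF]

lemma hermiteF_hasDerivAt : ∀ (m : ℕ) (x : ℝ),
    HasDerivAt (hermiteF m) (2 * m * hermiteF (m - 1) x) x := by
  intro m
  induction m using Nat.strong_induction_on with
  | _ m ih =>
    match m with
    | 0 => intro x; simpa [hermiteF] using (hasDerivAt_const x (1:ℝ))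
    | 1 =>
      intro x
      have : HasDerivAt (fun y : ℝ => 2 * y) 2 x := by
        simpa using (hasDerivAt_id x).const_mul (2:ℝ)
      simpa [hermiteF] using this
    | (m+2) =>
      intro x
      have h1 := ih (m+1) (by omega) x
      have h0 := ih m (by omega) x
      have hx : HasDerivAt (fun y : ℝ => y) 1 x := hasDerivAt_id x
      have hfun : HasDerivAt (fun y : ℝ => 2 * y * hermiteF (m+1) y - 2 * (m+1) * hermiteF m y)
          ((2 * 1) * hermiteF (m+1) x + (2 * x) * (2 * ((m+1:ℕ):ℝ) * hermiteF ((m+1)-1) x)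
            - 2 * (m+1) * (2 * m * hermiteF (m-1) x)) x := by
        exact (((hx.const_mul 2).mul h1)).sub (h0.const_mul (2 * ((m:ℝ)+1)))
      have : (fun y : ℝ => 2 * y * hermiteF (m+1) y - 2 * (m+1) * hermiteF m y) = hermiteF (m+2) := by
        funext y; simp [hermiteF]
      rw [this] at hfun
      convert hfun using 1
      simp only [show m+2-1 = m+1 from rfl, show m+1-1 = m from rfl]
      rw [hermiteF_succ m x]
      push_cast
      ring

/-- band matrices: `A * band d c = band (d+1) (2c)` -/
noncomputable def bandM (N : ℕ) (α : Fin N → ℝ) (d : ℕ) (c : ℝ) (x : ℝ) :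
    Matrix (Fin N) (Fin N) ℂ :=
  Matrix.of fun j k =>
    if (k : ℕ) + d ≤ (j : ℕ) then
      ((c * hermiteF ((j : ℕ) - (k : ℕ) - d) x / Nat.factorial ((j : ℕ) - (k : ℕ) - d) *
          (α j / α k) : ℝ) : ℂ)
    else 0

lemma Lmat_eq_band {N : ℕ} (α : Fin N → ℝ) (x : ℝ) : Lmat N α x = bandM N α 0 1 x := by
  ext j k
  simp [Lmat, bandM]

lemma A_mul_band {N : ℕ} {α : Fin N → ℝ} (hα : ∀ j, 0 < α j) (d : ℕ) (c : ℝ) (x : ℝ) :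
    Amat N α * bandM N α d c x = bandM N α (d+1) (2*c) x := by
  ext j k
  rw [Matrix.mul_apply]
  rcases j with ⟨jv, hj⟩
  match jv with
  | 0 =>
    simp only [Amat, bandM, Matrix.of_apply]
    rw [Finset.sum_eq_zero]
    · simp
    · intro l _
      simp
  | (m+1) =>
    set j : Fin N := ⟨m+1, hj⟩
    have hm : m < N := by omega
    set l₀ : Fin N := ⟨m, hm⟩
    have hsum : ∀ l : Fin N, l ∈ Finset.univ →
        Amat N α j l * bandM N α d c x l k =
        if l = l₀ then Amat N α j l₀ * bandM N α d c x l₀ k else 0 := by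
      intro l _
      by_cases h : l = l₀
      · simp [h]
      · have : ¬ ((j : ℕ) = (l : ℕ) + 1) := by
          simp only [Fin.ext_iff] at h
          simp only [j, l₀] at *
          omega
        simp [Amat, this, h]
    rw [Finset.sum_congr rfl hsum, Finset.sum_ite_eq' Finset.univ l₀]
    simp only [Finset.mem_univ, if_true]
    have hj0 : ((j : ℕ) = (l₀ : ℕ) + 1) := rfl
    simp only [Amat, bandM, Matrix.of_apply, hj0, if_true]
    by_cases hk : (k : ℕ) + d ≤ m
    · have hk' : (k : ℕ) + (d+1) ≤ (j : ℕ) := by simp only [j]; omega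
      rw [if_pos hk, if_pos hk']
      have hidx : (j : ℕ) - (k : ℕ) - (d+1) = m - (k : ℕ) - d := by
        simp only [j]; omega
      rw [hidx]
      rw [← Complex.ofReal_mul]
      congr 1
      have hα0 : α l₀ ≠ 0 := (hα l₀).ne'
      have hαk : α k ≠ 0 := (hα k).ne'
      have hfk : ((m - (k:ℕ) - d).factorial : ℝ) ≠ 0 :=
        Nat.cast_ne_zero.mpr (Nat.factorial_ne_zero _)
      field_simp
      ring
    · have hk' : ¬ ((k : ℕ) + (d+1) ≤ (j : ℕ)) := by simp only [j]; omega
      rw [if_neg hk, if_neg hk', mul_zero]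

lemma Lmat_entry_hasDerivAt {N : ℕ} (α : Fin N → ℝ) (x : ℝ) (j k : Fin N) :
    HasDerivAt (fun y => Lmat N α y j k) (bandM N α 1 2 x j k) x := by
  by_cases hkj : (k : ℕ) ≤ (j : ℕ)
  · have hfun : (fun y => Lmat N α y j k) =
        fun y => ((hermiteF ((j:ℕ)-(k:ℕ)) y / Nat.factorial ((j:ℕ)-(k:ℕ)) * (α j / α k) : ℝ) : ℂ) := by
      funext y; simp only [Lmat, Matrix.of_apply, if_pos hkj]
    rw [hfun]
    set m := (j:ℕ) - (k:ℕ) with hm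
    have hre : HasDerivAt (fun y => hermiteF m y / Nat.factorial m * (α j / α k))
        (2 * m * hermiteF (m-1) x / Nat.factorial m * (α j / α k)) x :=
      ((hermiteF_hasDerivAt m x).div_const _).mul_const _
    have := hre.ofReal_comp
    convert this using 1
    rcases Nat.eq_zero_or_pos m with h0 | hpos
    · have : ¬ ((k:ℕ) + 1 ≤ (j:ℕ)) := by omega
      simp only [bandM, Matrix.of_apply, if_neg this, h0]
      simp
    · obtain ⟨n, hn⟩ : ∃ n, m = n + 1 := ⟨m - 1, by omega⟩
      have hlt : (k:ℕ) + 1 ≤ (j:ℕ) := by omega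
      have hidx : (j:ℕ) - (k:ℕ) - 1 = n := by omega
      simp only [bandM, Matrix.of_apply, if_pos hlt, hidx, hn]
      have hfacc : ((n+1).factorial : ℝ) = (n+1) * n.factorial := by
        rw [Nat.factorial_succ]; push_cast; ring
      have hfn : (n.factorial : ℝ) ≠ 0 := Nat.cast_ne_zero.mpr (Nat.factorial_ne_zero _)
      have h : (2 * ((n+1:ℕ):ℝ) * hermiteF n x / ((n+1).factorial : ℝ))
          = 2 * hermiteF n x / (n.factorial : ℝ) := by
        rw [hfacc]
        have hn1 : ((n:ℝ)+1) ≠ 0 := by positivity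
        field_simp
        push_cast
        ring
      rw [Complex.ofReal_inj, show n+1-1 = n from rfl, h]
  · have hfun : (fun y => Lmat N α y j k) = fun _ => (0 : ℂ) := by
      funext y; simp only [Lmat, Matrix.of_apply, if_neg hkj]
    rw [hfun]
    have : ¬ ((k:ℕ) + 1 ≤ (j:ℕ)) := by omega
    simp only [bandM, Matrix.of_apply, if_neg this]
    exact hasDerivAt_const x 0

lemma Phi_hasDerivAt {N : ℕ} {α : Fin N → ℝ} (hα : ∀ j, 0 < α j) (x : ℝ) (j k : Fin N) :
    HasDerivAt (fun y => PhiMat N α y j k)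
      ((Amat N α * PhiMat N α x - (x:ℂ) • PhiMat N α x) j k) x := by
  have he : HasDerivAt (fun y : ℝ => Real.exp (-y^2/2)) (Real.exp (-x^2/2) * (-x)) x := by
    have h1 : HasDerivAt (fun y : ℝ => -y^2/2) (-x) x := by
      have := ((hasDerivAt_pow 2 x).fun_neg).div_const 2
      refine this.congr_deriv (Eq.symm ?_)
      push_cast; ring
    simpa using h1.exp
  have heC := he.ofReal_comp
  have hL := Lmat_entry_hasDerivAt α x j k
  have hprod := heC.fun_mul hL
  have hfun : (fun y => PhiMat N α y j k) =
      fun y => ((Real.exp (-y^2/2) : ℝ) : ℂ) * Lmat N α y j k := by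
    funext y; simp [PhiMat, Complex.real_smul]
  rw [hfun]
  refine hprod.congr_deriv (Eq.symm ?_)
  have hAL : Amat N α * Lmat N α x = bandM N α 1 2 x := by
    rw [Lmat_eq_band α x, A_mul_band hα]
    norm_num
  have h1 : (Amat N α * PhiMat N α x) j k
      = ((Real.exp (-x^2/2) : ℝ) : ℂ) * bandM N α 1 2 x j k := by
    rw [show PhiMat N α x = Real.exp (-x^2/2) • Lmat N α x from rfl, Matrix.mul_smul, hAL]
    simp [Complex.real_smul]
  have h2 : ((x:ℂ) • PhiMat N α x) j k = (x:ℂ) * (((Real.exp (-x^2/2) : ℝ) : ℂ) * Lmat N α x j k) := by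
    simp only [PhiMat, Matrix.smul_apply, Complex.real_smul, smul_eq_mul]
    try ring
  rw [Matrix.sub_apply, h1, h2]
  push_cast
  try ring

lemma Phi_MDiff {N : ℕ} {α : Fin N → ℝ} (hα : ∀ j, 0 < α j) :
    ∀ j k, Differentiable ℝ fun y => PhiMat N α y j k :=
  fun j k y => (Phi_hasDerivAt hα y j k).differentiableAt

lemma matDeriv_Phi {N : ℕ} {α : Fin N → ℝ} (hα : ∀ j, 0 < α j) (x : ℝ) :
    matDeriv N (PhiMat N α) x = Amat N α * PhiMat N α x - (x:ℂ) • PhiMat N α x := by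
  ext j k
  exact (Phi_hasDerivAt hα x j k).deriv

lemma casimir_L {N : ℕ} {α : Fin N → ℝ} (hα : ∀ j, 0 < α j) (x : ℝ) :
    (Jmat N - (x:ℂ) • Amat N α + (1/2 : ℂ) • (Amat N α * Amat N α)) * Lmat N α x =
      Lmat N α x * Jmat N := by
  have hAL : Amat N α * Lmat N α x = bandM N α 1 2 x := by
    rw [Lmat_eq_band α x, A_mul_band hα]; norm_num
  have hA2L : Amat N α * Amat N α * Lmat N α x = bandM N α 2 4 x := by
    rw [mul_assoc, hAL, A_mul_band hα]; norm_num
  have hexp : (Jmat N - (x:ℂ) • Amat N α + (1/2 : ℂ) • (Amat N α * Amat N α)) * Lmat N α x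
      = Jmat N * Lmat N α x - (x:ℂ) • (bandM N α 1 2 x) + (1/2 : ℂ) • (bandM N α 2 4 x) := by
    rw [add_mul, sub_mul, smul_mul_assoc, smul_mul_assoc, hAL, hA2L]
  rw [hexp]
  ext j k
  simp only [Matrix.add_apply, Matrix.sub_apply, Matrix.smul_apply, smul_eq_mul,
    Jmat, Matrix.diagonal_mul, Matrix.mul_diagonal, Lmat, bandM, Matrix.of_apply]
  by_cases h0 : (k:ℕ) ≤ (j:ℕ)
  · by_cases h1 : (k:ℕ) + 1 ≤ (j:ℕ)
    · by_cases h2 : (k:ℕ) + 2 ≤ (j:ℕ)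
      · -- generic case
        rw [if_pos h0, if_pos h1, if_pos h2]
        obtain ⟨n, hjk⟩ : ∃ n, (j:ℕ) = (k:ℕ) + n + 2 := ⟨(j:ℕ) - (k:ℕ) - 2, by omega⟩
        have e0 : (j:ℕ) - (k:ℕ) = n + 2 := by omega
        have e1 : (j:ℕ) - (k:ℕ) - 1 = n + 1 := by omega
        have e2 : (j:ℕ) - (k:ℕ) - 2 = n := by omega
        rw [e0, hjk]
        simp only [show n+2-1 = n+1 from rfl, show n+2-2 = n from rfl]
        have hrec : hermiteF (n+2) x = 2*x*hermiteF (n+1) x - 2*((n:ℝ)+1)*hermiteF n x := by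
          simp [hermiteF]
        have hf2 : ((n+2).factorial : ℝ) = ((n:ℝ)+2) * ((n:ℝ)+1) * n.factorial := by
          rw [Nat.factorial_succ, Nat.factorial_succ]; push_cast; ring
        have hf1 : ((n+1).factorial : ℝ) = ((n:ℝ)+1) * n.factorial := by
          rw [Nat.factorial_succ]; push_cast; ring
        have hαj : α j ≠ 0 := (hα j).ne'
        have hαk : α k ≠ 0 := (hα k).ne'
        have hfn : (n.factorial : ℝ) ≠ 0 := Nat.cast_ne_zero.mpr (Nat.factorial_ne_zero n)
        have hn1 : ((n:ℝ)+1) ≠ 0 := by positivity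
        have hn2 : ((n:ℝ)+2) ≠ 0 := by positivity
        have key : (((k:ℕ):ℝ)+(n:ℝ)+2+1) * ((2*x*hermiteF (n+1) x - 2*((n:ℝ)+1)*hermiteF n x)
              / (((n:ℝ)+2)*((n:ℝ)+1)*n.factorial) * (α j/α k))
            - x * (2*hermiteF (n+1) x / (((n:ℝ)+1)*n.factorial) * (α j/α k))
            + 1/2 * (4*hermiteF n x / (n.factorial : ℝ) * (α j/α k))
            = (2*x*hermiteF (n+1) x - 2*((n:ℝ)+1)*hermiteF n x)
              / (((n:ℝ)+2)*((n:ℝ)+1)*n.factorial) * (α j/α k) * (((k:ℕ):ℝ)+1) := by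
          field_simp
          ring
        rw [hrec, hf2, hf1]
        have keyC := congrArg (fun r : ℝ => (r : ℂ)) key
        push_cast at keyC ⊢
        linear_combination keyC
      · -- j = k+1
        have hjk : (j:ℕ) = (k:ℕ) + 1 := by omega
        rw [if_pos h0, if_pos h1, if_neg h2]
        have e0 : (j:ℕ) - (k:ℕ) = 1 := by omega
        rw [e0, hjk]
        simp only [show 1-1 = 0 from rfl]
        simp only [hermiteF, Nat.factorial_one, Nat.factorial_zero]
        push_cast
        ring
    · -- j = k
      have hjk : (j:ℕ) = (k:ℕ) := by omega
      have h2 : ¬ ((k:ℕ) + 2 ≤ (j:ℕ)) := by omega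
      rw [if_pos h0, if_neg h1, if_neg h2]
      have e0 : (j:ℕ) - (k:ℕ) = 0 := by omega
      rw [e0, hjk]
      push_cast
      ring
  · have h1 : ¬ ((k:ℕ) + 1 ≤ (j:ℕ)) := by omega
    have h2 : ¬ ((k:ℕ) + 2 ≤ (j:ℕ)) := by omega
    rw [if_neg h0, if_neg h1, if_neg h2]
    ring

lemma casimir_Phi {N : ℕ} {α : Fin N → ℝ} (hα : ∀ j, 0 < α j) (x : ℝ) :
    (Jmat N - (x:ℂ) • Amat N α + (1/2 : ℂ) • (Amat N α * Amat N α)) * PhiMat N α x =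
      PhiMat N α x * Jmat N := by
  rw [show PhiMat N α x = Real.exp (-x^2/2) • Lmat N α x from rfl, Matrix.mul_smul,
    Matrix.smul_mul, casimir_L hα]

section MatCalc

variable {N : ℕ}

lemma MDiff_mul {F G : ℝ → Matrix (Fin N) (Fin N) ℂ}
    (hF : ∀ i j, Differentiable ℝ fun y => F y i j)
    (hG : ∀ i j, Differentiable ℝ fun y => G y i j) :
    ∀ i j, Differentiable ℝ fun y => (F y * G y) i j := by
  intro i j
  simp only [Matrix.mul_apply]
  exact Differentiable.fun_sum fun l _ => (hF i l).fun_mul (hG l j)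

lemma MDiff_sub {F G : ℝ → Matrix (Fin N) (Fin N) ℂ}
    (hF : ∀ i j, Differentiable ℝ fun y => F y i j)
    (hG : ∀ i j, Differentiable ℝ fun y => G y i j) :
    ∀ i j, Differentiable ℝ fun y => (F y - G y) i j := by
  intro i j
  simp only [Matrix.sub_apply]
  exact (hF i j).sub (hG i j)

lemma MDiff_const (A : Matrix (Fin N) (Fin N) ℂ) :
    ∀ i j, Differentiable ℝ fun _ : ℝ => A i j :=
  fun _ _ => differentiable_const _

lemma MDiff_smulid {F : ℝ → Matrix (Fin N) (Fin N) ℂ}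
    (hF : ∀ i j, Differentiable ℝ fun y => F y i j) :
    ∀ i j, Differentiable ℝ fun y : ℝ => ((y:ℂ) • F y) i j := by
  intro i j
  simp only [Matrix.smul_apply, smul_eq_mul]
  exact (Complex.ofRealCLM.differentiable).mul (hF i j)

lemma matDeriv_mul {F G : ℝ → Matrix (Fin N) (Fin N) ℂ}
    (hF : ∀ i j, Differentiable ℝ fun y => F y i j)
    (hG : ∀ i j, Differentiable ℝ fun y => G y i j) (x : ℝ) :
    matDeriv N (fun y => F y * G y) x = matDeriv N F x * G x + F x * matDeriv N G x := by
  ext i j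
  have h : HasDerivAt (fun y => (F y * G y) i j)
      (∑ l, (deriv (fun y => F y i l) x * G x l j + F x i l * deriv (fun y => G y l j) x)) x := by
    simp only [Matrix.mul_apply]
    exact HasDerivAt.fun_sum fun l _ => ((hF i l x).hasDerivAt.fun_mul ((hG l j x).hasDerivAt))
  have hd := h.deriv
  simp only [Matrix.mul_apply] at hd
  simp only [matDeriv, Matrix.of_apply, Matrix.add_apply, Matrix.mul_apply]
  rw [hd, Finset.sum_add_distrib]

lemma matDeriv_add {F G : ℝ → Matrix (Fin N) (Fin N) ℂ}
    (hF : ∀ i j, Differentiable ℝ fun y => F y i j)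
    (hG : ∀ i j, Differentiable ℝ fun y => G y i j) (x : ℝ) :
    matDeriv N (fun y => F y + G y) x = matDeriv N F x + matDeriv N G x := by
  ext i j
  simp only [matDeriv, Matrix.of_apply, Matrix.add_apply]
  exact deriv_add (hF i j x) (hG i j x)

lemma matDeriv_sub {F G : ℝ → Matrix (Fin N) (Fin N) ℂ}
    (hF : ∀ i j, Differentiable ℝ fun y => F y i j)
    (hG : ∀ i j, Differentiable ℝ fun y => G y i j) (x : ℝ) :
    matDeriv N (fun y => F y - G y) x = matDeriv N F x - matDeriv N G x := by
  ext i j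
  simp only [matDeriv, Matrix.of_apply, Matrix.sub_apply]
  exact deriv_sub (hF i j x) (hG i j x)

lemma matDeriv_const (A : Matrix (Fin N) (Fin N) ℂ) (x : ℝ) :
    matDeriv N (fun _ => A) x = 0 := by
  ext i j
  simp [matDeriv]

lemma matDeriv_const_mul (A : Matrix (Fin N) (Fin N) ℂ)
    {F : ℝ → Matrix (Fin N) (Fin N) ℂ}
    (hF : ∀ i j, Differentiable ℝ fun y => F y i j) (x : ℝ) :
    matDeriv N (fun y => A * F y) x = A * matDeriv N F x := by
  rw [matDeriv_mul (MDiff_const A) hF, matDeriv_const]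
  simp

lemma matDeriv_smulid {F : ℝ → Matrix (Fin N) (Fin N) ℂ}
    (hF : ∀ i j, Differentiable ℝ fun y => F y i j) (x : ℝ) :
    matDeriv N (fun y : ℝ => (y:ℂ) • F y) x = F x + (x:ℂ) • matDeriv N F x := by
  ext i j
  have hy : HasDerivAt (fun y : ℝ => (y:ℂ)) 1 x := by
    simpa using (hasDerivAt_id x).ofReal_comp
  have h := hy.fun_mul (hF i j x).hasDerivAt
  have hfun : (fun y : ℝ => ((y:ℂ) • F y) i j) = fun y : ℝ => (y:ℂ) * F y i j := by
    funext y; simp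
  simp only [matDeriv, Matrix.of_apply, Matrix.add_apply, Matrix.smul_apply, smul_eq_mul]
  rw [h.deriv]
  ring

end MatCalc


/-- **Conjugation identities for `Φ(x) = e^{−x²/2}L(x)`** (Lemma 5.12 of the paper):
conjugation by `Φ` turns `𝒟 = ∂_x + A` into `∂_x + x`, the Casimir
`J − xA + ½A²` into `J`, and `D = −½∂_x² + ∂_x(xI−A) + J` into
`½(−∂_x² + x² − 1)I + J`. -/
theorem hermite_conjugation_identities
    (N : ℕ) (hN : 1 ≤ N) (α : Fin N → ℝ) (hα : ∀ j, 0 < α j) :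
    (∀ F : ℝ → Matrix (Fin N) (Fin N) ℂ,
      (∀ i j, Differentiable ℝ fun y => F y i j) →
      ∀ x : ℝ,
        (matDeriv N F x + F x * Amat N α) * PhiMat N α x =
          matDeriv N (fun y => F y * PhiMat N α y) x +
            (x : ℂ) • (F x * PhiMat N α x)) ∧
    (∀ x : ℝ,
      (Jmat N - (x : ℂ) • Amat N α + (1 / 2 : ℂ) • (Amat N α * Amat N α)) *
          PhiMat N α x =
        PhiMat N α x * Jmat N) ∧
    (∀ F : ℝ → Matrix (Fin N) (Fin N) ℂ,
      (∀ i j, Differentiable ℝ fun y => F y i j) →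
      (∀ i j, Differentiable ℝ fun y => deriv (fun z => F z i j) y) →
      ∀ x : ℝ,
        (-(1 / 2 : ℂ) • matDeriv N (matDeriv N F) x +
            matDeriv N F x * ((x : ℂ) • (1 : Matrix (Fin N) (Fin N) ℂ) - Amat N α) +
            F x * Jmat N) * PhiMat N α x =
          -(1 / 2 : ℂ) • matDeriv N (matDeriv N (fun y => F y * PhiMat N α y)) x +
            ((1 / 2 : ℂ) * ((x : ℂ) ^ 2 - 1)) • (F x * PhiMat N α x) +
            (F x * PhiMat N α x) * Jmat N) := by
  have hΦd : ∀ i j, Differentiable ℝ fun y => PhiMat N α y i j := Phi_MDiff hα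
  have hΦ1d : ∀ i j, Differentiable ℝ
      fun y : ℝ => (Amat N α * PhiMat N α y - (y:ℂ) • PhiMat N α y) i j :=
    MDiff_sub (MDiff_mul (MDiff_const (Amat N α)) hΦd) (MDiff_smulid hΦd)
  have hdΦ : ∀ x : ℝ, matDeriv N (PhiMat N α) x
      = Amat N α * PhiMat N α x - (x:ℂ) • PhiMat N α x := matDeriv_Phi hα
  refine ⟨?_, fun x => casimir_Phi hα x, ?_⟩
  · intro F hF x
    rw [matDeriv_mul hF hΦd, hdΦ]
    rw [add_mul, mul_assoc, mul_sub, mul_smul_comm]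
    abel
  · intro F hF hF' x
    have hF'' : ∀ i j, Differentiable ℝ fun y => matDeriv N F y i j := hF'
    have h1 : (matDeriv N fun y => F y * PhiMat N α y)
        = fun y => matDeriv N F y * PhiMat N α y +
            F y * (Amat N α * PhiMat N α y - (y:ℂ) • PhiMat N α y) := by
      funext y
      rw [matDeriv_mul hF hΦd, hdΦ]
    have h2 : matDeriv N (matDeriv N fun y => F y * PhiMat N α y) x
        = (matDeriv N (matDeriv N F) x * PhiMat N α x +
             matDeriv N F x * (Amat N α * PhiMat N α x - (x:ℂ) • PhiMat N α x))
          + (matDeriv N F x * (Amat N α * PhiMat N α x - (x:ℂ) • PhiMat N α x) +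
             F x * (Amat N α * (Amat N α * PhiMat N α x - (x:ℂ) • PhiMat N α x)
               - PhiMat N α x
               - (x:ℂ) • (Amat N α * PhiMat N α x - (x:ℂ) • PhiMat N α x))) := by
      rw [h1]
      rw [matDeriv_add (MDiff_mul hF'' hΦd) (MDiff_mul hF hΦ1d),
          matDeriv_mul hF'' hΦd, matDeriv_mul hF hΦ1d, hdΦ,
          matDeriv_sub (MDiff_mul (MDiff_const (Amat N α)) hΦd) (MDiff_smulid hΦd),
          matDeriv_const_mul (Amat N α) hΦd, matDeriv_smulid hΦd, hdΦ]
      abel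
    rw [h2]
    have hPJ : PhiMat N α x * Jmat N
        = (Jmat N - (x:ℂ) • Amat N α + (1/2 : ℂ) • (Amat N α * Amat N α)) * PhiMat N α x :=
      (casimir_Phi hα x).symm
    rw [mul_assoc (F x) (PhiMat N α x) (Jmat N), hPJ]
    simp only [mul_add, add_mul, mul_sub, sub_mul, smul_mul_assoc, mul_smul_comm,
      smul_add, smul_sub, smul_smul, mul_assoc, mul_one, one_mul, neg_smul, neg_mul]
    module
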